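/- Let d ≥ 2, W : ℝ^d → [0,∞) continuous, and Φ ∈ C¹(ℝ^d,ℝ^d). The following are equivalent: (i) for all u ∈ L^∞ ∩ C^∞(Ω,ℝ^d) with ∇·u = 0 one has the pointwise inequality ∇·[Φ(u)] ≤ ½|∇u|² + W(u) on Ω; (ii) |Π₀∇Φ(z)|² ≤ 2W(z) for all z ∈ ℝ^d, where Π₀ is the orthogonal projection onto traceless matrices, Π₀U = U − (Tr(U)/d) I_d. -/

import Mathlib

open MeasureTheory Filter Topology ENNReal

noncomputable section

/-- Squared Euclidean norm on `ℝ^d` (modelled as `Fin d → ℝ`). -/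
def vnorm2 {d : ℕ} (v : Fin d → ℝ) : ℝ := ∑ i, v i ^ 2

/-- Partial derivative in the `i`-th coordinate direction of a map `ℝ^d → ℝ^d`. -/
def pd {d : ℕ} (i : Fin d) (u : (Fin d → ℝ) → Fin d → ℝ) (x : Fin d → ℝ) : Fin d → ℝ :=
  fderiv ℝ u x (Pi.single i 1)

/-- Partial derivative in the `i`-th coordinate direction of a scalar function on `ℝ^d`. -/
def pdS {d : ℕ} (i : Fin d) (w : (Fin d → ℝ) → ℝ) (x : Fin d → ℝ) : ℝ :=
  fderiv ℝ w x (Pi.single i 1)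

/-- Squared Frobenius norm `|∇u|²` of the Jacobian of `u`. -/
def gradSq {d : ℕ} (u : (Fin d → ℝ) → Fin d → ℝ) (x : Fin d → ℝ) : ℝ :=
  ∑ i, ∑ j, (pd i u x j) ^ 2

/-- Divergence-free condition `∇ ⋅ u = 0`. -/
def IsDivFree {d : ℕ} (u : (Fin d → ℝ) → Fin d → ℝ) : Prop :=
  ∀ x, ∑ i, pd i u x i = 0

/-- Periodicity (period 1) in the last `d-1` coordinates: `u` is a map on `Ω = ℝ × 𝕋^{d-1}`. -/
def IsPeriodic {d : ℕ} [NeZero d] (u : (Fin d → ℝ) → Fin d → ℝ) : Prop :=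
  ∀ (x : Fin d → ℝ) (i : Fin d), i ≠ 0 → u (x + Pi.single i 1) = u x

/-- Fundamental domain `ℝ × [0,1)^{d-1}` of `Ω = ℝ × 𝕋^{d-1}`. -/
def strip (d : ℕ) [NeZero d] : Set (Fin d → ℝ) :=
  {x | ∀ i : Fin d, i ≠ 0 → x i ∈ Set.Ico (0 : ℝ) 1}

/-- The unit cube `[0,1)^d`. -/
def cube (d : ℕ) : Set (Fin d → ℝ) := Set.univ.pi fun _ => Set.Ico (0 : ℝ) 1

/-- The `x'`-average `ū(t) = ∫_{𝕋^{d-1}} u(t,x') dx'`. -/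
def avg {d : ℕ} [NeZero d] (u : (Fin d → ℝ) → Fin d → ℝ) (t : ℝ) : Fin d → ℝ :=
  ∫ y in cube d, u (Function.update y 0 t)

/-- Energy density `½|∇u|² + W(u)`. -/
def eden {d : ℕ} (W : (Fin d → ℝ) → ℝ) (u : (Fin d → ℝ) → Fin d → ℝ) (x : Fin d → ℝ) : ℝ :=
  (1 / 2) * gradSq u x + W (u x)

/-- Total energy `E(u)` on `Ω`, with values in `[0,∞]`. -/
def energy (d : ℕ) [NeZero d] (W : (Fin d → ℝ) → ℝ) (u : (Fin d → ℝ) → Fin d → ℝ) : ℝ≥0∞ :=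
  ∫⁻ x in strip d, ENNReal.ofReal (eden W u x)

/-- Membership in `Ḣ¹_div(Ω, ℝ^d)` (with classical derivatives). -/
def Adm (d : ℕ) [NeZero d] (u : (Fin d → ℝ) → Fin d → ℝ) : Prop :=
  Differentiable ℝ u ∧ IsPeriodic u ∧ IsDivFree u ∧ IntegrableOn (gradSq u) (strip d)

/-- The boundary conditions `ū(-∞) = u⁻`, `ū(+∞) = u⁺`. -/
def BdryCond (d : ℕ) [NeZero d] (u : (Fin d → ℝ) → Fin d → ℝ) (um up : Fin d → ℝ) : Prop :=
  Tendsto (avg u) atBot (𝓝 um) ∧ Tendsto (avg u) atTop (𝓝 up)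

/-- `S_a`: the zeros of `W` in the hyperplane `{z₁ = a}`. -/
def wellSet (d : ℕ) [NeZero d] (W : (Fin d → ℝ) → ℝ) (a : ℝ) : Set (Fin d → ℝ) :=
  {z | z 0 = a ∧ W z = 0}

/-- Hypothesis (H2): `liminf_{z₁ → a, |z'| → ∞} W(z₁,z') > 0`. -/
def H2cond (d : ℕ) [NeZero d] (W : (Fin d → ℝ) → ℝ) (a : ℝ) : Prop :=
  ∃ c > (0 : ℝ), ∃ δ > (0 : ℝ), ∃ R : ℝ, ∀ z : Fin d → ℝ,
    |z 0 - a| < δ → R ≤ ∑ i, (if i = (0 : Fin d) then 0 else z i ^ 2) → c ≤ W z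

/-- The `(i,j)` entry of `Π₀∇Φ(z)`, the traceless part of the Jacobian of `Φ` at `z`. -/
def pi0entry {d : ℕ} (Φ : (Fin d → ℝ) → Fin d → ℝ) (z : Fin d → ℝ) (i j : Fin d) : ℝ :=
  pd i Φ z j - (if i = j then (∑ k, pd k Φ z k) / (d : ℝ) else 0)

/-- The squared Frobenius norm `|Π₀∇Φ(z)|²`. -/
def pi0NormSq {d : ℕ} (Φ : (Fin d → ℝ) → Fin d → ℝ) (z : Fin d → ℝ) : ℝ :=
  ∑ i, ∑ j, (pi0entry Φ z i j) ^ 2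

-- oscillation function
def sgen (t : ℝ) : ℝ := Real.sin (2 * Real.pi * t) / (2 * Real.pi)

lemma two_pi_pos : (0:ℝ) < 2 * Real.pi := by positivity

lemma sgen_hasDerivAt (t : ℝ) :
    HasDerivAt sgen (Real.cos (2 * Real.pi * t)) t := by
  have h1 : HasDerivAt (fun t : ℝ => 2 * Real.pi * t) (2 * Real.pi) t := by
    simpa using (hasDerivAt_id t).const_mul (2 * Real.pi)
  have h2 : HasDerivAt (fun t : ℝ => Real.sin (2 * Real.pi * t))
      (Real.cos (2 * Real.pi * t) * (2 * Real.pi)) t :=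
    (Real.hasDerivAt_sin _).comp t h1
  have h3 := h2.div_const (2 * Real.pi)
  have hne : (2 * Real.pi) ≠ 0 := ne_of_gt two_pi_pos
  show HasDerivAt (fun t => Real.sin (2 * Real.pi * t) / (2 * Real.pi)) _ t
  simpa [sgen, mul_div_assoc, div_self hne] using h3

lemma sgen_contDiff : ContDiff ℝ (⊤ : ℕ∞) sgen :=
  (Real.contDiff_sin.comp (contDiff_const.mul contDiff_id)).div_const _

lemma sgen_zero : sgen 0 = 0 := by simp [sgen]

lemma sgen_abs_le (t : ℝ) : |sgen t| ≤ 1 := by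
  rw [sgen, abs_div, abs_of_pos two_pi_pos]
  rw [div_le_one two_pi_pos]
  have := Real.abs_sin_le_one (2 * Real.pi * t)
  have := Real.pi_gt_three
  linarith

lemma sgen_periodic (t : ℝ) : sgen (t + 1) = sgen t := by
  simp [sgen, mul_add, mul_one, Real.sin_add_two_pi]

section Construction

variable {d : ℕ}

/-- The test map `u(x) = z + v(x)` realizing Jacobian `A` at the origin. -/
def uA (A : Fin d → Fin d → ℝ) (z : Fin d → ℝ) : (Fin d → ℝ) → Fin d → ℝ :=
  fun x j => z j + A j j * sgen (∑ k, x k) + ∑ i, (A i j - A j j) * sgen (x i)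

def sumCLM (d : ℕ) : (Fin d → ℝ) →L[ℝ] ℝ := ∑ k, ContinuousLinearMap.proj k

lemma sumCLM_apply (x : Fin d → ℝ) : sumCLM d x = ∑ k, x k := by
  simp [sumCLM]

def DA (A : Fin d → Fin d → ℝ) (x : Fin d → ℝ) : (Fin d → ℝ) →L[ℝ] (Fin d → ℝ) :=
  ContinuousLinearMap.pi fun j =>
    (A j j * Real.cos (2 * Real.pi * ∑ k, x k)) • sumCLM d +
      ∑ i, ((A i j - A j j) * Real.cos (2 * Real.pi * x i)) • ContinuousLinearMap.proj i

lemma uA_hasFDerivAt (A : Fin d → Fin d → ℝ) (z : Fin d → ℝ) (x : Fin d → ℝ) :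
    HasFDerivAt (uA A z) (DA A x) x := by
  apply hasFDerivAt_pi'.2
  intro j
  simp only [uA, DA, ContinuousLinearMap.proj_pi]
  have h1 : HasFDerivAt (fun x : Fin d → ℝ => sgen (∑ k, x k))
      (Real.cos (2 * Real.pi * ∑ k, x k) • sumCLM d) x := by
    have h := (sgen_hasDerivAt (∑ k, x k)).comp_hasFDerivAt_of_eq x
      (sumCLM d).hasFDerivAt (sumCLM_apply x).symm
    have heq : (sgen ∘ ⇑(sumCLM d)) = fun y : Fin d → ℝ => sgen (∑ k, y k) := by
      funext y; simp [Function.comp, sumCLM_apply]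
    rwa [heq] at h
  have h2 : HasFDerivAt (fun x : Fin d → ℝ => A j j * sgen (∑ k, x k))
      ((A j j * Real.cos (2 * Real.pi * ∑ k, x k)) • sumCLM d) x := by
    have := h1.const_mul (A j j)
    rwa [smul_smul] at this
  have h3 : ∀ i : Fin d, HasFDerivAt (fun x : Fin d → ℝ => (A i j - A j j) * sgen (x i))
      (((A i j - A j j) * Real.cos (2 * Real.pi * x i)) •
        (ContinuousLinearMap.proj i : (Fin d → ℝ) →L[ℝ] ℝ)) x := by
    intro i
    have hb : HasFDerivAt (fun y : Fin d → ℝ => sgen (y i))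
        (Real.cos (2 * Real.pi * x i) •
          (ContinuousLinearMap.proj i : (Fin d → ℝ) →L[ℝ] ℝ)) x := by
      have := (sgen_hasDerivAt (x i)).comp_hasFDerivAt x (hasFDerivAt_apply (𝕜 := ℝ) i x)
      exact this
    have := hb.const_mul (A i j - A j j)
    rwa [smul_smul] at this
  have h4 := HasFDerivAt.fun_sum (u := Finset.univ) (fun i (_ : i ∈ Finset.univ) => h3 i)
  exact (h2.const_add (z j)).add h4

lemma uA_pd (A : Fin d → Fin d → ℝ) (z : Fin d → ℝ) (x : Fin d → ℝ) (i j : Fin d) :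
    pd i (uA A z) x j =
      A j j * Real.cos (2 * Real.pi * ∑ k, x k)
        + (A i j - A j j) * Real.cos (2 * Real.pi * x i) := by
  rw [pd, (uA_hasFDerivAt A z x).fderiv]
  simp [DA, sumCLM_apply, Pi.single_apply, mul_ite, Finset.sum_ite_eq']

end Construction

section Construction2

variable {d : ℕ}

lemma uA_zero (A : Fin d → Fin d → ℝ) (z : Fin d → ℝ) : uA A z 0 = z := by
  funext j; simp [uA, sgen]

lemma uA_pd_zero (A : Fin d → Fin d → ℝ) (z : Fin d → ℝ) (i j : Fin d) :
    pd i (uA A z) 0 j = A i j := by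
  rw [uA_pd]
  norm_num

lemma uA_contDiff (A : Fin d → Fin d → ℝ) (z : Fin d → ℝ) :
    ContDiff ℝ (⊤ : ℕ∞) (uA A z) := by
  apply contDiff_pi.2
  intro j
  simp only [uA]
  have hsum : ContDiff ℝ (⊤ : ℕ∞) (fun x : Fin d → ℝ => ∑ k, x k) := by
    apply ContDiff.sum
    intro k _
    exact (ContinuousLinearMap.proj k : (Fin d → ℝ) →L[ℝ] ℝ).contDiff
  refine ContDiff.add (ContDiff.add contDiff_const ?_) ?_
  · exact contDiff_const.mul (sgen_contDiff.comp hsum)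
  · apply ContDiff.sum
    intro i _
    exact contDiff_const.mul (sgen_contDiff.comp
      (ContinuousLinearMap.proj i : (Fin d → ℝ) →L[ℝ] ℝ).contDiff)

lemma uA_bdd (A : Fin d → Fin d → ℝ) (z : Fin d → ℝ) :
    ∃ M, ∀ x, ‖uA A z x‖ ≤ M := by
  refine ⟨‖z‖ + ∑ j, (|A j j| + ∑ i, |A i j - A j j|), fun x => ?_⟩
  have hM : (0:ℝ) ≤ ‖z‖ + ∑ j, (|A j j| + ∑ i, |A i j - A j j|) := by
    have : (0:ℝ) ≤ ∑ j, (|A j j| + ∑ i, |A i j - A j j|) :=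
      Finset.sum_nonneg fun j _ => by positivity
    positivity
  rw [pi_norm_le_iff_of_nonneg hM]
  intro j
  rw [Real.norm_eq_abs]
  have h1 : |z j| ≤ ‖z‖ := by
    have := norm_le_pi_norm z j
    simpa using this
  have h2 : |A j j * sgen (∑ k, x k)| ≤ |A j j| := by
    rw [abs_mul]
    exact mul_le_of_le_one_right (abs_nonneg _) (sgen_abs_le _)
  have h3 : |∑ i, (A i j - A j j) * sgen (x i)| ≤ ∑ i, |A i j - A j j| := by
    refine (Finset.abs_sum_le_sum_abs _ _).trans (Finset.sum_le_sum fun i _ => ?_)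
    rw [abs_mul]
    exact mul_le_of_le_one_right (abs_nonneg _) (sgen_abs_le _)
  have h4 : |A j j| + ∑ i, |A i j - A j j| ≤ ∑ j', (|A j' j'| + ∑ i, |A i j' - A j' j'|) := by
    apply Finset.single_le_sum (f := fun j' => |A j' j'| + ∑ i, |A i j' - A j' j'|)
    · intro j' _; positivity
    · exact Finset.mem_univ j
  calc |uA A z x j| ≤ |z j + A j j * sgen (∑ k, x k)| + |∑ i, (A i j - A j j) * sgen (x i)| :=
        abs_add_le _ _
    _ ≤ |z j| + |A j j * sgen (∑ k, x k)| + |∑ i, (A i j - A j j) * sgen (x i)| := by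
        have := abs_add_le (z j) (A j j * sgen (∑ k, x k)); linarith
    _ ≤ ‖z‖ + ∑ j', (|A j' j'| + ∑ i, |A i j' - A j' j'|) := by linarith

lemma uA_periodic [NeZero d] (A : Fin d → Fin d → ℝ) (z : Fin d → ℝ) :
    IsPeriodic (uA A z) := by
  intro x i _
  funext j
  have hσ : ∑ k, (x + Pi.single i (1:ℝ) : Fin d → ℝ) k = (∑ k, x k) + 1 := by
    simp [Finset.sum_add_distrib, Pi.single_apply, Finset.sum_ite_eq']
  have hco : ∀ k, sgen ((x + Pi.single i (1:ℝ) : Fin d → ℝ) k) = sgen (x k) := by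
    intro k
    by_cases hk : k = i
    · subst hk
      rw [Pi.add_apply, Pi.single_eq_same, sgen_periodic]
    · rw [Pi.add_apply, Pi.single_eq_of_ne hk, add_zero]
  simp only [uA, hσ, sgen_periodic]
  congr 1
  exact Finset.sum_congr rfl fun k _ => by rw [hco k]

lemma uA_divfree (A : Fin d → Fin d → ℝ) (z : Fin d → ℝ) (hA : ∑ i, A i i = 0) :
    IsDivFree (uA A z) := by
  intro x
  simp only [uA_pd, sub_self, zero_mul, add_zero, ← Finset.sum_mul, hA]

end Construction2

lemma div_comp {d : ℕ} (Φ u : (Fin d → ℝ) → Fin d → ℝ) (hΦ : Differentiable ℝ Φ)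
    (hu : Differentiable ℝ u) (x : Fin d → ℝ) (i j : Fin d) :
    pd i (fun y => Φ (u y)) x j = ∑ k, pd i u x k * pd k Φ (u x) j := by
  have hc : fderiv ℝ (fun y => Φ (u y)) x = (fderiv ℝ Φ (u x)).comp (fderiv ℝ u x) :=
    fderiv_comp x (hΦ (u x)) (hu x)
  rw [pd, hc]
  simp only [ContinuousLinearMap.comp_apply]
  have hv : fderiv ℝ u x (Pi.single i 1)
      = ∑ k, (pd i u x k) • (Pi.single k 1 : Fin d → ℝ) := by
    funext l
    simp only [Finset.sum_apply, Pi.smul_apply, Pi.single_apply, smul_eq_mul, mul_ite,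
      mul_one, mul_zero]
    rw [Finset.sum_ite_eq]
    simp [pd]
  rw [hv, map_sum]
  simp only [_root_.map_smul]
  simp [pd, Finset.sum_apply]

lemma sum_sum_add {d : ℕ} (f g : Fin d → Fin d → ℝ) :
    ∑ i, ∑ j, (f i j + g i j) = (∑ i, ∑ j, f i j) + (∑ i, ∑ j, g i j) := by
  rw [← Finset.sum_add_distrib]
  exact Finset.sum_congr rfl fun i _ => Finset.sum_add_distrib

lemma sum_sum_half {d : ℕ} (f : Fin d → Fin d → ℝ) :
    ∑ i, ∑ j, (1/2 : ℝ) * f i j = (1/2) * ∑ i, ∑ j, f i j := by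
  rw [Finset.mul_sum]
  exact Finset.sum_congr rfl fun i _ => (Finset.mul_sum _ _ _).symm

lemma key_ineq {d : ℕ} (N M P : Fin d → Fin d → ℝ) (w tr : ℝ)
    (hN : ∑ i, N i i = 0)
    (hPM : ∀ i j, P i j = M i j - (if i = j then tr else 0))
    (hP2 : ∑ i, ∑ j, (P i j)^2 ≤ 2*w) :
    ∑ i, ∑ j, N i j * M j i ≤ (1/2) * (∑ i, ∑ j, N i j ^2) + w := by
  have h1 : ∑ i, ∑ j, N i j * M j i = (∑ i, ∑ j, N i j * P j i) + tr * (∑ i, N i i) := by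
    rw [Finset.mul_sum, ← Finset.sum_add_distrib]
    refine Finset.sum_congr rfl fun i _ => ?_
    have hpt : ∀ j, N i j * M j i = N i j * P j i + (if j = i then N i j * tr else 0) := by
      intro j
      by_cases hji : j = i <;> rw [hPM] <;> simp [hji] <;> ring
    rw [Finset.sum_congr rfl fun j _ => hpt j, Finset.sum_add_distrib,
      Finset.sum_ite_eq' Finset.univ i (fun j => N i j * tr)]
    simp [mul_comm]
  have h2 : ∑ i, ∑ j, N i j * P j i ≤
      ∑ i, ∑ j, ((1/2) * N i j ^2 + (1/2) * (P j i)^2) := by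
    refine Finset.sum_le_sum fun i _ => Finset.sum_le_sum fun j _ => ?_
    nlinarith [sq_nonneg (N i j - P j i)]
  have h3 : ∑ i, ∑ j, ((1/2) * N i j ^2 + (1/2) * (P j i)^2)
      = (1/2) * (∑ i, ∑ j, N i j ^2) + (1/2) * (∑ i, ∑ j, (P i j)^2) := by
    rw [sum_sum_add]
    rw [Finset.sum_comm (f := fun i j => (1/2:ℝ) * (P j i)^2)]
    rw [sum_sum_half, sum_sum_half]
  rw [h1, hN, mul_zero, add_zero]
  linarith

/-- Proposition `criterium_strong`: for `Φ ∈ C¹(ℝ^d,ℝ^d)`, the pointwise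
estimate `∇·[Φ(u)] ≤ ½|∇u|² + W(u)` for all smooth bounded divergence-free maps `u` on `Ω`
is equivalent to the pointwise condition `|Π₀∇Φ(z)|² ≤ 2W(z)` for all `z ∈ ℝ^d`. -/
theorem statement17 (d : ℕ) [NeZero d] (hd : 2 ≤ d)
    (W : (Fin d → ℝ) → ℝ) (hWc : Continuous W) (hWnn : ∀ z, 0 ≤ W z)
    (Φ : (Fin d → ℝ) → Fin d → ℝ) (hΦ : ContDiff ℝ 1 Φ) :
    (∀ u : (Fin d → ℝ) → Fin d → ℝ, ContDiff ℝ (⊤ : ℕ∞) u → (∃ M, ∀ x, ‖u x‖ ≤ M) →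
      IsPeriodic u → IsDivFree u →
      ∀ x, (∑ i, pd i (fun y => Φ (u y)) x i) ≤ (1 / 2) * gradSq u x + W (u x)) ↔
    (∀ z, pi0NormSq Φ z ≤ 2 * W z) := by
  classical
  have hΦd : Differentiable ℝ Φ := hΦ.differentiable one_ne_zero
  constructor
  · -- pointwise estimate implies the algebraic condition
    intro h z
    have hdR : ((d:ℝ)) ≠ 0 := Nat.cast_ne_zero.2 (NeZero.ne d)
    obtain ⟨A, hA⟩ : ∃ A : Fin d → Fin d → ℝ, A = fun i j => pi0entry Φ z j i := ⟨_, rfl⟩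
    have htrP : ∑ i, pi0entry Φ z i i = 0 := by
      have hpe : ∀ i : Fin d, pi0entry Φ z i i
          = pd i Φ z i - (∑ k, pd k Φ z k) / (d:ℝ) := by
        intro i; simp [pi0entry]
      rw [Finset.sum_congr rfl fun i _ => hpe i, Finset.sum_sub_distrib, Finset.sum_const,
        Finset.card_univ, Fintype.card_fin, nsmul_eq_mul, mul_div_cancel₀ _ hdR, sub_self]
    have htrA : ∑ i, A i i = 0 := by
      rw [hA]; exact htrP
    have key := h (uA A z) (uA_contDiff A z) (uA_bdd A z) (uA_periodic A z)
      (uA_divfree A z htrA) 0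
    have hud : Differentiable ℝ (uA A z) := (uA_contDiff A z).differentiable (by simp)
    have hLHS : ∑ i, pd i (fun y => Φ (uA A z y)) 0 i = ∑ i, ∑ k, A i k * pd k Φ z i := by
      refine Finset.sum_congr rfl fun i _ => ?_
      rw [div_comp Φ (uA A z) hΦd hud 0 i i, uA_zero]
      exact Finset.sum_congr rfl fun k _ => by rw [uA_pd_zero]
    have hgrad : gradSq (uA A z) 0 = ∑ i, ∑ j, A i j ^ 2 := by
      simp only [gradSq, uA_pd_zero]
    rw [hLHS, hgrad, uA_zero] at key
    have e1 : ∑ i, ∑ k, A i k * pd k Φ z i = ∑ i, ∑ j, pi0entry Φ z i j ^ 2 := by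
      have hs : ∑ i, ∑ k, A i k * pd k Φ z i
          = ∑ i, ∑ j, pi0entry Φ z i j * pd i Φ z j := by
        rw [Finset.sum_comm]
        exact Finset.sum_congr rfl fun i _ => Finset.sum_congr rfl fun j _ => by rw [hA]
      rw [hs]
      have hpt : ∀ i j, pi0entry Φ z i j * pd i Φ z j
          = pi0entry Φ z i j ^ 2
            + pi0entry Φ z i j * (if i = j then (∑ k, pd k Φ z k) / (d:ℝ) else 0) := by
        intro i j
        have hde : pd i Φ z j
            = pi0entry Φ z i j + (if i = j then (∑ k, pd k Φ z k) / (d:ℝ) else 0) := by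
          simp [pi0entry]
        rw [hde]; ring
      rw [Finset.sum_congr rfl fun i _ => Finset.sum_congr rfl fun j _ => hpt i j]
      rw [Finset.sum_congr rfl fun i (_ : i ∈ Finset.univ) => Finset.sum_add_distrib,
        Finset.sum_add_distrib]
      have hz : ∑ i, ∑ j,
          pi0entry Φ z i j * (if i = j then (∑ k, pd k Φ z k) / (d:ℝ) else 0) = 0 := by
        have hin : ∀ i : Fin d, ∑ j,
            pi0entry Φ z i j * (if i = j then (∑ k, pd k Φ z k) / (d:ℝ) else 0)
            = pi0entry Φ z i i * ((∑ k, pd k Φ z k) / (d:ℝ)) := by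
          intro i
          simp only [mul_ite, mul_zero]
          rw [Finset.sum_ite_eq Finset.univ i
            (fun j => pi0entry Φ z i j * ((∑ k, pd k Φ z k) / (d:ℝ)))]
          simp
        rw [Finset.sum_congr rfl fun i _ => hin i, ← Finset.sum_mul, htrP, zero_mul]
      rw [hz, add_zero]
    have e2 : ∑ i, ∑ j, A i j ^ 2 = ∑ i, ∑ j, pi0entry Φ z i j ^ 2 := by
      rw [Finset.sum_comm]
      exact Finset.sum_congr rfl fun i _ => Finset.sum_congr rfl fun j _ => by rw [hA]
    rw [e1, e2] at key
    have : pi0NormSq Φ z = ∑ i, ∑ j, pi0entry Φ z i j ^ 2 := rfl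
    rw [this]
    linarith
  · -- the algebraic condition implies the pointwise estimate
    intro h u hu _ _ hdiv x
    have hud : Differentiable ℝ u := hu.differentiable (by simp)
    have hL : ∑ i, pd i (fun y => Φ (u y)) x i = ∑ i, ∑ k, pd i u x k * pd k Φ (u x) i :=
      Finset.sum_congr rfl fun i _ => div_comp Φ u hΦd hud x i i
    rw [hL]
    have := key_ineq (fun i j => pd i u x j) (fun i j => pd i Φ (u x) j)
      (fun i j => pi0entry Φ (u x) i j) (W (u x)) ((∑ k, pd k Φ (u x) k) / (d:ℝ))
      (hdiv x) (fun i j => rfl) (h (u x))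
    simpa [gradSq] using this
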